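/- Let n ≥ 5 and let P be a pot such that C_min(P) = {W_n} (up to isomorphism). Then in any assembly of W_n from P, no bond-edge type appears both on an edge of the outer cycle and on a spoke edge not incident to that outer-cycle edge. -/

import Mathlib

/-!
Basic framework for flexible-tile DNA self-assembly.

Bond-edge types are elements of `Fin m`.  A cohesive end is either unhatted
(`Sum.inl a`) or hatted (`Sum.inr a`).  A tile is a finite multiset of cohesive
ends, and a pot is a finite set of tiles.
-/

/-- A tile over the bond-edge alphabet `Fin m`. -/
abbrev Tile (m : ℕ) : Type := Multiset (Fin m ⊕ Fin m)

/-- A pot: a finite set of tiles over the alphabet `Fin m`. -/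
abbrev Pot (m : ℕ) : Type := Finset (Tile m)

/-- A finite multigraph (nonempty finite vertex set, finite edge set; loops and
parallel edges allowed), edges recorded by their unordered pair of endpoints. -/
structure Multigraph where
  V : Type
  E : Type
  [fintypeV : Fintype V]
  [decEqV : DecidableEq V]
  [nonemptyV : Nonempty V]
  [fintypeE : Fintype E]
  ends : E → Sym2 V

attribute [instance] Multigraph.fintypeV Multigraph.decEqV
  Multigraph.nonemptyV Multigraph.fintypeE

/-- The order (number of vertices) of a multigraph. -/
def Multigraph.order (G : Multigraph) : ℕ := Fintype.card G.V

/-- An assembly of `G` from tiles over `Fin m`: each edge gets an orientation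
(an ordered pair of vertices compatible with its endpoints) and a bond-edge type. -/
structure Assembly (m : ℕ) (G : Multigraph) where
  orient : G.E → G.V × G.V
  label : G.E → Fin m
  orient_ends : ∀ e : G.E, G.ends e = s((orient e).1, (orient e).2)

/-- The tile of a vertex `v` under an assembly: one unhatted `a` for each edge
labeled `a` oriented out of `v`, one hatted `a` for each edge labeled `a`
oriented into `v`. -/
def Assembly.tileOf {m : ℕ} {G : Multigraph} (A : Assembly m G) (v : G.V) : Tile m :=
  (Finset.univ : Finset G.E).val.bind fun e =>
    (if (A.orient e).1 = v then {Sum.inl (A.label e)} else 0) +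
    (if (A.orient e).2 = v then {Sum.inr (A.label e)} else 0)

/-- `G` is realized by the pot `P`: there is an assembly of `G` all of whose
vertex tiles belong to `P`. -/
def Realizes {m : ℕ} (P : Pot m) (G : Multigraph) : Prop :=
  ∃ A : Assembly m G, ∀ v : G.V, A.tileOf v ∈ P

/-- `C(P)`: the class of multigraphs realized by `P`. -/
def CSet {m : ℕ} (P : Pot m) : Set Multigraph := {G | Realizes P G}

/-- `m_P`: the minimum order of a multigraph realized by `P`. -/
noncomputable def mP {m : ℕ} (P : Pot m) : ℕ :=
  sInf {n | ∃ G ∈ CSet P, G.order = n}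

/-- `C_min(P)`: the multigraphs realized by `P` of minimum order. -/
def Cmin {m : ℕ} (P : Pot m) : Set Multigraph :=
  {G ∈ CSet P | G.order = mP P}

/-- An isomorphism of multigraphs. -/
structure MultigraphIso (G H : Multigraph) where
  vEquiv : G.V ≃ H.V
  eEquiv : G.E ≃ H.E
  ends_eq : ∀ e : G.E, H.ends (eEquiv e) = (G.ends e).map vEquiv

/-- Two multigraphs are isomorphic. -/
def Isomorphic (G H : Multigraph) : Prop := Nonempty (MultigraphIso G H)

/-- Scenario 1: minimum number of tile types over all pots realizing `G`. -/
noncomputable def T1 (G : Multigraph) : ℕ :=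
  sInf {c | ∃ m : ℕ, ∃ P : Pot m, Realizes P G ∧ P.card = c}

/-- Scenario 1: minimum number of bond-edge types over all pots realizing `G`. -/
noncomputable def B1 (G : Multigraph) : ℕ :=
  sInf {m | ∃ P : Pot m, Realizes P G}

/-- Scenario 2: minimum number of tile types over pots `P` with `G ∈ C(P)` and
`m_P = |V(G)|`. -/
noncomputable def T2 (G : Multigraph) : ℕ :=
  sInf {c | ∃ m : ℕ, ∃ P : Pot m, Realizes P G ∧ mP P = G.order ∧ P.card = c}

/-- Scenario 2: minimum number of bond-edge types over pots `P` with `G ∈ C(P)`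
and `m_P = |V(G)|`. -/
noncomputable def B2 (G : Multigraph) : ℕ :=
  sInf {m | ∃ P : Pot m, Realizes P G ∧ mP P = G.order}

/-- Scenario 3: minimum number of tile types over pots `P` with `C_min(P)`
consisting exactly of the multigraphs isomorphic to `G`. -/
noncomputable def T3 (G : Multigraph) : ℕ :=
  sInf {c | ∃ m : ℕ, ∃ P : Pot m, Cmin P = {H | Isomorphic H G} ∧ P.card = c}

/-- Scenario 3: minimum number of bond-edge types over pots `P` with `C_min(P)`
consisting exactly of the multigraphs isomorphic to `G`. -/
noncomputable def B3 (G : Multigraph) : ℕ :=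
  sInf {m | ∃ P : Pot m, Cmin P = {H | Isomorphic H G}}

/-- The degree of a vertex (a loop contributes 2). -/
def Multigraph.degree (G : Multigraph) (v : G.V) : ℕ :=
  ∑ e : G.E, (if v ∈ G.ends e then (if (G.ends e).IsDiag then 2 else 1) else 0)

/-- `av(G)`: the number of distinct vertex degrees in `G`. -/
def av (G : Multigraph) : ℕ := (Finset.univ.image G.degree).card

/-- `ev(G)`: the number of distinct even vertex degrees in `G`. -/
def ev (G : Multigraph) : ℕ :=
  ((Finset.univ.image G.degree).filter (fun d => Even d)).card

/-- `ov(G)`: the number of distinct odd vertex degrees in `G`. -/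
def ov (G : Multigraph) : ℕ :=
  ((Finset.univ.image G.degree).filter (fun d => Odd d)).card

/-- `z i t`: the net number of cohesive ends of type `i` on tile `t`
(unhatted count minus hatted count). -/
def zval {m : ℕ} (i : Fin m) (t : Tile m) : ℤ :=
  (t.count (Sum.inl i) : ℤ) - (t.count (Sum.inr i) : ℤ)

/-- The wheel graph on `n` vertices: the hub is `none`; the outer-cycle
vertices are `some i` for `i : Fin (n-1)`.  Edge `Sum.inl i` is the spoke from
the hub to `some i`; edge `Sum.inr i` is the outer-cycle edge from `some i` to
`some ((i+1) mod (n-1))`. -/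
def wheel (n : ℕ) : Multigraph where
  V := Option (Fin (n - 1))
  E := Fin (n - 1) ⊕ Fin (n - 1)
  ends e :=
    match e with
    | Sum.inl i => s((none : Option (Fin (n - 1))), some i)
    | Sum.inr i => s(some i,
        some ⟨(i.val + 1) % (n - 1), Nat.mod_lt _ (by have := i.isLt; omega)⟩)

/-- The cycle graph on `n` vertices (vertices `none, some 0, …, some (n-2)`,
edge `k` joining the `k`-th and `(k+1 mod n)`-th vertices in this order). -/
def cycleVtx (n : ℕ) (k : Fin n) : Option (Fin (n - 1)) :=
  if h : k.val = 0 then none else some ⟨k.val - 1, by have := k.isLt; omega⟩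

def cycleGraph (n : ℕ) : Multigraph where
  V := Option (Fin (n - 1))
  E := Fin n
  ends k := s(cycleVtx n k,
    cycleVtx n ⟨(k.val + 1) % n, Nat.mod_lt _ (by have := k.isLt; omega)⟩)
/-! ### Auxiliary material for the proof of `wheel_spoke_lemma` -/

/-- The tile of a vertex, written as a sum of an "out" part and an "in" part. -/
theorem Assembly.tileOf_eq_sum {m : ℕ} {G : Multigraph} (A : Assembly m G) (v : G.V) :
    A.tileOf v =
      (∑ e : G.E, (if (A.orient e).1 = v then ({Sum.inl (A.label e)} : Tile m) else 0))
        + ∑ e : G.E, (if (A.orient e).2 = v then ({Sum.inr (A.label e)} : Tile m) else 0) := by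
  rw [← Finset.sum_add_distrib]
  rw [Assembly.tileOf, Multiset.bind, Multiset.join, Finset.sum]

open Classical in
/-- The multigraph obtained from an assembled multigraph by "swapping" the heads of
two oriented edges. -/
noncomputable def swapGraph {m : ℕ} {G : Multigraph} (A : Assembly m G) (e1 e2 : G.E) :
    Multigraph where
  V := G.V
  E := G.E
  ends e :=
    if e = e1 then s((A.orient e1).1, (A.orient e2).2)
    else if e = e2 then s((A.orient e2).1, (A.orient e1).2)
    else G.ends e

open Classical in
/-- The swapped assembly of the swapped graph. -/
noncomputable def swapAssembly {m : ℕ} {G : Multigraph} (A : Assembly m G) (e1 e2 : G.E) :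
    Assembly m (swapGraph A e1 e2) where
  orient e :=
    if e = e1 then ((A.orient e1).1, (A.orient e2).2)
    else if e = e2 then ((A.orient e2).1, (A.orient e1).2)
    else A.orient e
  label := A.label
  orient_ends e := by
    simp only [swapGraph]
    rcases eq_or_ne e e1 with h | h
    · simp [h]
    rcases eq_or_ne e e2 with h2 | h2
    · rcases eq_or_ne e2 e1 with h3 | h3 <;> simp [h, h2, h3]
    · have h' : @Ne G.E e e1 := h; have h2' : @Ne G.E e e2 := h2; simp [h', h2', A.orient_ends e]

theorem tileOf_swap {m : ℕ} {G : Multigraph} (A : Assembly m G) (e1 e2 : G.E)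
    (hne : e1 ≠ e2) (hlab : A.label e1 = A.label e2) (v : G.V) :
    (swapAssembly A e1 e2).tileOf v = A.tileOf v := by
  classical
  rw [Assembly.tileOf_eq_sum (G := swapGraph A e1 e2) (swapAssembly A e1 e2) v, Assembly.tileOf_eq_sum]
  congr 1
  · apply Finset.sum_congr rfl
    intro e _
    rcases eq_or_ne e e1 with h | h
    · simp [swapAssembly, swapGraph, h]
    rcases eq_or_ne e e2 with h2 | h2
    · simp [swapAssembly, swapGraph, h, h2, hne.symm]
    · have h' : @Ne G.E e e1 := h; have h2' : @Ne G.E e e2 := h2; simp [swapAssembly, swapGraph, h', h2']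
  · refine Fintype.sum_equiv (Equiv.swap e1 e2) _ _ (fun e => ?_)
    rcases eq_or_ne e e1 with h | h
    · simp [swapAssembly, swapGraph, h, Equiv.swap_apply_left, hlab]
    rcases eq_or_ne e e2 with h2 | h2
    · simp [swapAssembly, swapGraph, h, h2, hne.symm, Equiv.swap_apply_right, hlab]
    · simp [swapAssembly, swapGraph, h, h2, Equiv.swap_apply_of_ne_of_ne h h2]

theorem wheel_ends_injective (n : ℕ) (hn : 5 ≤ n) :
    Function.Injective (wheel n).ends := by
  have hN : 4 ≤ n - 1 := by omega
  intro x y hxy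
  match x, y with
  | Sum.inl a, Sum.inl b =>
    simp only [wheel, Sym2.eq_iff, Option.some.injEq, reduceCtorEq, and_false, false_and,
      or_false, true_and] at hxy
    exact congrArg Sum.inl hxy
  | Sum.inl a, Sum.inr b =>
    simp only [wheel, Sym2.eq_iff, reduceCtorEq, false_and, and_false, or_self] at hxy
  | Sum.inr a, Sum.inl b =>
    simp only [wheel, Sym2.eq_iff, reduceCtorEq, false_and, and_false, or_self] at hxy
  | Sum.inr a, Sum.inr b =>
    simp only [wheel, Sym2.eq_iff, Option.some.injEq] at hxy
    rcases hxy with ⟨h, -⟩ | ⟨h1, h2⟩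
    · exact congrArg Sum.inr h
    · exfalso
      have ha : a.val = (b.val + 1) % (n - 1) := congrArg Fin.val h1
      have hb : (a.val + 1) % (n - 1) = b.val := congrArg Fin.val h2
      have hal : a.val < n - 1 := a.isLt
      have hbl : b.val < n - 1 := b.isLt
      rcases Nat.lt_or_ge (b.val + 1) (n - 1) with hb1 | hb1
      · rw [Nat.mod_eq_of_lt hb1] at ha
        rcases Nat.lt_or_ge (a.val + 1) (n - 1) with ha1 | ha1
        · rw [Nat.mod_eq_of_lt ha1] at hb; omega
        · have : a.val + 1 = n - 1 := by omega
          rw [this, Nat.mod_self] at hb; omega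
      · have hbv : b.val + 1 = n - 1 := by omega
        rw [hbv, Nat.mod_self] at ha
        rw [ha] at hb
        rw [Nat.mod_eq_of_lt (by omega)] at hb
        omega

def MultigraphIso.refl (G : Multigraph) : MultigraphIso G G :=
  ⟨Equiv.refl _, Equiv.refl _, fun e => by simp⟩

/-- If `C_min(P) = {W_n}` (up to isomorphism) with `n ≥ 5`, then in any assembly
of `W_n` from `P`, no bond-edge type appears both on an outer-cycle edge
(`Sum.inr i`) and on a spoke (`Sum.inl j`) not incident to it, i.e. if an
outer-cycle edge and a spoke share a bond-edge type then the spoke is incident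
to that outer-cycle edge. -/
theorem wheel_spoke_lemma (n : ℕ) (hn : 5 ≤ n) {m : ℕ} (P : Pot m)
    (hP : Cmin P = {H | Isomorphic H (wheel n)})
    (A : Assembly m (wheel n)) (hA : ∀ v, A.tileOf v ∈ P)
    (i j : Fin (n - 1))
    (hlab : A.label (Sum.inr i) = A.label (Sum.inl j)) :
    j = i ∨ j.val = (i.val + 1) % (n - 1) := by
  by_contra hcon
  push_neg at hcon
  obtain ⟨hji, hji'⟩ := hcon
  set e1 : (wheel n).E := Sum.inr i with he1
  set e2 : (wheel n).E := Sum.inl j with he2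
  have hne : e1 ≠ e2 := by rw [he1, he2]; exact Sum.inr_ne_inl
  set i' : Fin (n - 1) := ⟨(i.val + 1) % (n - 1),
    Nat.mod_lt _ (by have := i.isLt; omega)⟩ with hi'
  have hji2 : i' ≠ j := fun h => hji' (congrArg Fin.val h).symm
  have hij : i ≠ j := Ne.symm hji
  -- the swapped graph is realized by P
  have hG'real : Realizes P (swapGraph A e1 e2) :=
    ⟨swapAssembly A e1 e2, fun v => by
      rw [tileOf_swap A e1 e2 hne hlab v]; exact hA v⟩
  have hwheelmem : wheel n ∈ Cmin P := by
    rw [hP]; exact ⟨MultigraphIso.refl _⟩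
  have hmP : (wheel n).order = mP P := hwheelmem.2
  have horder : (swapGraph A e1 e2).order = (wheel n).order := rfl
  have hG'min : swapGraph A e1 e2 ∈ Cmin P := ⟨hG'real, horder.trans hmP⟩
  rw [hP] at hG'min
  obtain ⟨ψ⟩ := hG'min
  have hInj : Function.Injective (swapGraph A e1 e2).ends := by
    intro x y hxy
    apply ψ.eEquiv.injective
    apply wheel_ends_injective n hn
    rw [ψ.ends_eq, ψ.ends_eq, hxy]
  -- ends of the swapped graph
  have hend1 : (swapGraph A e1 e2).ends e1 =
      s((A.orient e1).1, (A.orient e2).2) := by simp [swapGraph]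
  have hend2 : (swapGraph A e1 e2).ends e2 =
      s((A.orient e2).1, (A.orient e1).2) := by simp [swapGraph, hne.symm]
  have hendk : ∀ k : Fin (n - 1), k ≠ j →
      (swapGraph A e1 e2).ends (Sum.inl k) = s((none : Option (Fin (n - 1))), some k) := by
    intro k hk
    have h1 : (Sum.inl k : (wheel n).E) ≠ e1 := by simp [he1]
    have h2 : (Sum.inl k : (wheel n).E) ≠ e2 := by simp [he2, hk]
    simp only [swapGraph, if_neg h1, if_neg h2]
    exact (if_neg h1).trans ((if_neg h2).trans rfl)
  -- orientation data
  have h1 : s((A.orient e1).1, (A.orient e1).2) =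
      s((some i : Option (Fin (n - 1))), some i') := (A.orient_ends e1).symm.trans rfl
  have h2 : s((A.orient e2).1, (A.orient e2).2) =
      s((none : Option (Fin (n - 1))), some j) := (A.orient_ends e2).symm.trans rfl
  have h1 := Sym2.eq_iff.1 h1; have h2 := Sym2.eq_iff.1 h2
  rcases h2 with ⟨hb1, hb2⟩ | ⟨hb1, hb2⟩
  · -- orient e2 = (none, some j) : e2 becomes parallel to a spoke
    rcases h1 with ⟨ha1, ha2⟩ | ⟨ha1, ha2⟩
    · have heq : (swapGraph A e1 e2).ends e2 = (swapGraph A e1 e2).ends (Sum.inl i') := by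
        rw [hend2, hendk i' hji2, hb1, ha2]
        rfl
      have := hInj heq
      rw [he2] at this
      exact hji2 (Sum.inl.inj this).symm
    · have heq : (swapGraph A e1 e2).ends e2 = (swapGraph A e1 e2).ends (Sum.inl i) := by
        rw [hend2, hendk i hij, hb1, ha2]
        rfl
      have := hInj heq
      rw [he2] at this
      exact hij (Sum.inl.inj this).symm
  · -- orient e2 = (some j, none) : e1 becomes parallel to a spoke
    rcases h1 with ⟨ha1, ha2⟩ | ⟨ha1, ha2⟩
    · have heq : (swapGraph A e1 e2).ends e1 = (swapGraph A e1 e2).ends (Sum.inl i) := by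
        rw [hend1, hendk i hij, hb2, ha1]
        exact Sym2.eq_swap
      have := hInj heq
      rw [he1] at this
      exact Sum.inr_ne_inl this
    · have heq : (swapGraph A e1 e2).ends e1 = (swapGraph A e1 e2).ends (Sum.inl i') := by
        rw [hend1, hendk i' hji2, hb2, ha1]
        exact Sym2.eq_swap
      have := hInj heq
      rw [he1] at this
      exact Sum.inr_ne_inl this
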